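/- Let $n \geq 2$, let $t \geq 1/n$, and let $p = (p_1,\dots,p_n)$ be a probability vector with $0 < p_i \leq t$ for all $i$. Then $\sum_{i=1}^n \log p_i \leq -n \log n - \frac{1}{2t^2}\sum_{i=1}^n \Big(p_i - \frac{1}{n}\Big)^2$. -/

import Mathlib

lemma log_le_aux {a y : ℝ} (ha : 1 ≤ a) (hy : 0 < y) (hya : y ≤ a) :
    Real.log y ≤ (y - 1) - (y - 1) ^ 2 / (2 * a ^ 2) := by
  have ha0 : (0:ℝ) < a := lt_of_lt_of_le one_pos ha
  set g : ℝ → ℝ := fun x => (x - 1) - (x - 1) ^ 2 / (2 * a ^ 2) - Real.log x with hgdef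
  have hderiv : ∀ x : ℝ, 0 < x → HasDerivAt g (1 - (x - 1) / a ^ 2 - 1 / x) x := by
    intro x hx
    have h1 : HasDerivAt (fun x : ℝ => (x - 1)) 1 x := (hasDerivAt_id x).sub_const 1
    have h2 : HasDerivAt (fun x : ℝ => (x - 1) ^ 2 / (2 * a ^ 2))
        ((↑2 * (x - 1) ^ (2 - 1) * 1) / (2 * a ^ 2)) x := (h1.pow 2).div_const _
    have h3 : HasDerivAt Real.log (1 / x) x := by
      simpa [one_div] using Real.hasDerivAt_log hx.ne'
    have := (h1.sub h2).sub h3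
    refine this.congr_deriv ?_
    norm_num
    field_simp
  have hsign : ∀ x : ℝ, 0 < x → x ≤ a →
      1 - (x - 1) / a ^ 2 - 1 / x = (x - 1) * (a ^ 2 - x) / (a ^ 2 * x) := by
    intro x hx _
    field_simp
    ring
  have hg1 : g 1 = 0 := by simp [hgdef]
  have key : 0 ≤ g y := by
    rcases le_or_gt y 1 with hcase | hcase
    · -- g antitone on [y, 1]
      have hmono : AntitoneOn g (Set.Icc y 1) := by
        apply antitoneOn_of_deriv_nonpos (convex_Icc y 1)
        · intro x hx
          exact ((hderiv x (lt_of_lt_of_le hy hx.1)).continuousAt).continuousWithinAt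
        · intro x hx
          rw [interior_Icc] at hx
          exact ((hderiv x (lt_trans hy hx.1)).differentiableAt).differentiableWithinAt
        · intro x hx
          rw [interior_Icc] at hx
          have hx0 : 0 < x := lt_trans hy hx.1
          rw [(hderiv x hx0).deriv, hsign x hx0 (le_trans hx.2.le ha)]
          apply div_nonpos_of_nonpos_of_nonneg
          · apply mul_nonpos_of_nonpos_of_nonneg
            · linarith [hx.2]
            · nlinarith [hx.2, sq_nonneg (a - 1)]
          · positivity
      have := hmono (Set.mem_Icc.2 ⟨le_refl y, hcase⟩) (Set.mem_Icc.2 ⟨hcase, le_refl 1⟩) hcase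
      rw [hg1] at this
      exact this
    · -- g monotone on [1, y]
      have hmono : MonotoneOn g (Set.Icc 1 y) := by
        apply monotoneOn_of_deriv_nonneg (convex_Icc 1 y)
        · intro x hx
          exact ((hderiv x (lt_of_lt_of_le one_pos hx.1)).continuousAt).continuousWithinAt
        · intro x hx
          rw [interior_Icc] at hx
          exact ((hderiv x (lt_trans one_pos hx.1)).differentiableAt).differentiableWithinAt
        · intro x hx
          rw [interior_Icc] at hx
          have hx0 : 0 < x := lt_trans one_pos hx.1
          rw [(hderiv x hx0).deriv, hsign x hx0 (le_trans hx.2.le hya)]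
          apply div_nonneg
          · apply mul_nonneg
            · linarith [hx.1]
            · nlinarith [le_trans hx.2.le hya]
          · positivity
      have := hmono (Set.mem_Icc.2 ⟨le_refl 1, hcase.le⟩) (Set.mem_Icc.2 ⟨hcase.le, le_refl y⟩)
        hcase.le
      rw [hg1] at this
      exact this
  have : Real.log y ≤ (y - 1) - (y - 1) ^ 2 / (2 * a ^ 2) := by
    simp only [hgdef] at key; linarith
  exact this

/-- For a probability vector `p` on `n ≥ 2` points with `0 < pᵢ ≤ t` and `t ≥ 1/n`,
`∑ log pᵢ ≤ -n log n - (1/(2t²)) ∑ (pᵢ - 1/n)²`. -/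
theorem sum_log_le_of_entries_le {n : ℕ} (hn : 2 ≤ n) (t : ℝ) (ht : 1 / (n : ℝ) ≤ t)
    (p : Fin n → ℝ) (hp0 : ∀ i, 0 < p i) (hpt : ∀ i, p i ≤ t) (hp1 : ∑ i, p i = 1) :
    ∑ i, Real.log (p i)
      ≤ -((n : ℝ) * Real.log n) - (1 / (2 * t ^ 2)) * ∑ i, (p i - 1 / (n : ℝ)) ^ 2 := by
  have hn0 : (0:ℝ) < n := by positivity
  have ht0 : (0:ℝ) < t := lt_of_lt_of_le (by positivity) ht
  have hna : (1:ℝ) ≤ n * t := by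
    have := mul_le_mul_of_nonneg_left ht hn0.le
    rwa [mul_one_div, div_self hn0.ne'] at this
  have hpt' : ∀ i, Real.log (p i) ≤
      -Real.log n + (n : ℝ) * (p i - 1 / n) - (1 / (2 * t ^ 2)) * (p i - 1 / n) ^ 2 := by
    intro i
    have hy : 0 < (n : ℝ) * p i := mul_pos hn0 (hp0 i)
    have hya : (n : ℝ) * p i ≤ n * t := by
      exact mul_le_mul_of_nonneg_left (hpt i) hn0.le
    have key := log_le_aux hna hy hya
    rw [Real.log_mul hn0.ne' (hp0 i).ne'] at key
    have e1 : ((n : ℝ) * p i - 1) = n * (p i - 1 / n) := by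
      field_simp
    have e2 : ((n : ℝ) * (p i - 1 / n)) ^ 2 / (2 * ((n : ℝ) * t) ^ 2)
        = (1 / (2 * t ^ 2)) * (p i - 1 / n) ^ 2 := by
      rw [mul_pow, mul_pow,
        show (2:ℝ) * ((n:ℝ) ^ 2 * t ^ 2) = (n:ℝ) ^ 2 * (2 * t ^ 2) by ring,
        mul_div_mul_left _ _ (pow_ne_zero 2 hn0.ne')]
      ring
    rw [e1, e2] at key
    linarith
  calc ∑ i, Real.log (p i)
      ≤ ∑ i, (-Real.log n + (n : ℝ) * (p i - 1 / n) - (1 / (2 * t ^ 2)) * (p i - 1 / n) ^ 2) :=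
        Finset.sum_le_sum fun i _ => hpt' i
    _ = -((n : ℝ) * Real.log n) - (1 / (2 * t ^ 2)) * ∑ i, (p i - 1 / (n : ℝ)) ^ 2 := by
        have hz : ∑ i, (p i - 1 / (n : ℝ)) = 0 := by
          rw [Finset.sum_sub_distrib, hp1, Finset.sum_const]
          simp only [Finset.card_univ, Fintype.card_fin, nsmul_eq_mul]
          rw [mul_one_div, div_self hn0.ne']
          ring
        rw [Finset.sum_sub_distrib, Finset.sum_add_distrib, ← Finset.mul_sum, ← Finset.mul_sum,
          hz, Finset.sum_const]
        simp only [Finset.card_univ, Fintype.card_fin, nsmul_eq_mul]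
        ring
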